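/- Suppose the multiplier M_{m,Λ,Θ} is well defined and invertible on H, m ∈ ℓ^∞, and Θ = {Θ_i} is a g-Bessel sequence. Then Λ = {Λ_i} satisfies the lower g-frame condition: there exists A > 0 such that ∑_{i∈J} ‖Λ_i f‖² ≥ A‖f‖² for all f ∈ H. -/

import Mathlib

open ContinuousLinearMap
local notation "⟪" x ", " y "⟫" => @inner ℂ _ _ x y

theorem stmt4 {H : Type*} [NormedAddCommGroup H] [InnerProductSpace ℂ H] [CompleteSpace H]
    {J : Type*} {Hi : J → Type*} [∀ i, NormedAddCommGroup (Hi i)]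
    [∀ i, InnerProductSpace ℂ (Hi i)] [∀ i, CompleteSpace (Hi i)]
    (Λ Θ : ∀ i, H →L[ℂ] Hi i) (m : J → ℂ) (mB : ℝ) (hm : ∀ i, ‖m i‖ ≤ mB)
    (BΘ : ℝ)
    (hΘ : ∀ f : H, ∃ s : ℝ, HasSum (fun i => ‖Θ i f‖ ^ 2) s ∧ s ≤ BΘ * ‖f‖ ^ 2)
    (M Minv : H →L[ℂ] H)
    (hM : ∀ f : H, HasSum (fun i => m i • adjoint (Λ i) (Θ i f)) (M f))
    (hinv : M * Minv = 1 ∧ Minv * M = 1) :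
    ∃ A : ℝ, 0 < A ∧ ∀ f : H,
      ENNReal.ofReal (A * ‖f‖ ^ 2) ≤ ∑' i, ENNReal.ofReal (‖Λ i f‖ ^ 2) := by
  by_cases htriv : ∀ g : H, g = 0
  · refine ⟨1, one_pos, fun f => ?_⟩
    rw [htriv f]
    simp
  push_neg at htriv
  obtain ⟨g₀, hg₀⟩ := htriv
  have hMM : ∀ g : H, M (Minv g) = g := by
    intro g
    have := congrArg (fun T : H →L[ℂ] H => T g) hinv.1
    simpa [ContinuousLinearMap.mul_apply] using this
  -- mB > 0
  have hmB : 0 < mB := by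
    by_contra hmB
    push_neg at hmB
    have hm0 : ∀ i, m i = 0 := fun i => norm_le_zero_iff.mp ((hm i).trans hmB)
    have h0 : M (Minv g₀) = 0 := by
      have h := hM (Minv g₀)
      simp only [hm0, zero_smul] at h
      exact (hasSum_zero.unique h).symm
    exact hg₀ (by rw [← hMM g₀, h0])
  set C : ℝ := ‖Minv‖ with hC
  set E : ℝ := max (BΘ * C ^ 2) 1 with hE
  have hE1 : (1 : ℝ) ≤ E := le_max_right _ _
  have hEpos : 0 < E := lt_of_lt_of_le one_pos hE1
  set t : ℝ := 1 / (mB * E) with ht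
  have htpos : 0 < t := by positivity
  refine ⟨1 / (mB ^ 2 * E), by positivity, fun g => ?_⟩
  by_cases hS : ∑' i, ENNReal.ofReal (‖Λ i g‖ ^ 2) = ⊤
  · rw [hS]; exact le_top
  -- summability of ∑ ‖Λ i g‖²
  have hΛsummable : Summable (fun i => ‖Λ i g‖ ^ 2) := by
    have := ENNReal.summable_toReal hS
    simpa [ENNReal.toReal_ofReal (by positivity : (0:ℝ) ≤ ‖Λ _ g‖ ^ 2)] using this
  set s : ℝ := ∑' i, ‖Λ i g‖ ^ 2 with hs
  have hsnn : 0 ≤ s := tsum_nonneg fun i => by positivity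
  obtain ⟨sΘ, hsΘ, hsΘle⟩ := hΘ (Minv g)
  have hsΘnn : 0 ≤ sΘ := hsΘ.nonneg fun i => by positivity
  -- sΘ ≤ E * ‖g‖²
  have hMinvg : ‖Minv g‖ ≤ C * ‖g‖ := Minv.le_opNorm g
  have hsΘE : sΘ ≤ E * ‖g‖ ^ 2 := by
    rcases le_or_gt 0 BΘ with hB | hB
    · calc sΘ ≤ BΘ * ‖Minv g‖ ^ 2 := hsΘle
        _ ≤ BΘ * (C * ‖g‖) ^ 2 := by
            apply mul_le_mul_of_nonneg_left _ hB
            exact pow_le_pow_left₀ (norm_nonneg _) hMinvg 2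
        _ = BΘ * C ^ 2 * ‖g‖ ^ 2 := by ring
        _ ≤ E * ‖g‖ ^ 2 := by
            apply mul_le_mul_of_nonneg_right (le_max_left _ _) (by positivity)
    · have : sΘ ≤ 0 := hsΘle.trans (mul_nonpos_of_nonpos_of_nonneg hB.le (by positivity))
      exact this.trans (by positivity)
  -- inner product expansion
  have hsum : HasSum (fun i => m i * ⟪Λ i g, Θ i (Minv g)⟫) ⟪g, g⟫ := by
    have h := (hM (Minv g)).mapL (innerSL ℂ g)
    rw [hMM g] at h
    convert h using 2 with i
    all_goals first | rfl | simp [inner_smul_right, ContinuousLinearMap.adjoint_inner_right]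
  -- bound on terms
  have hterm : ∀ i, ‖m i * ⟪Λ i g, Θ i (Minv g)⟫‖
      ≤ mB / 2 * (t * ‖Θ i (Minv g)‖ ^ 2 + ‖Λ i g‖ ^ 2 / t) := by
    intro i
    have h1 : ‖m i * ⟪Λ i g, Θ i (Minv g)⟫‖ ≤ mB * (‖Λ i g‖ * ‖Θ i (Minv g)‖) := by
      rw [norm_mul]
      exact mul_le_mul (hm i) (norm_inner_le_norm _ _) (norm_nonneg _)
        ((norm_nonneg _).trans (hm i))
    refine h1.trans ?_
    have hamgm : ‖Λ i g‖ * ‖Θ i (Minv g)‖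
        ≤ (t * ‖Θ i (Minv g)‖ ^ 2 + ‖Λ i g‖ ^ 2 / t) / 2 := by
      have key : 0 ≤ (t * ‖Θ i (Minv g)‖ - ‖Λ i g‖) ^ 2 := sq_nonneg _
      have hcancel : ‖Λ i g‖ ^ 2 / t * t = ‖Λ i g‖ ^ 2 := div_mul_cancel₀ _ htpos.ne'
      nlinarith [key, htpos, hcancel, mul_pos htpos htpos]
    calc mB * (‖Λ i g‖ * ‖Θ i (Minv g)‖)
        ≤ mB * ((t * ‖Θ i (Minv g)‖ ^ 2 + ‖Λ i g‖ ^ 2 / t) / 2) :=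
          mul_le_mul_of_nonneg_left hamgm hmB.le
      _ = mB / 2 * (t * ‖Θ i (Minv g)‖ ^ 2 + ‖Λ i g‖ ^ 2 / t) := by ring
  -- summability of the majorant
  have hmaj : Summable (fun i => mB / 2 * (t * ‖Θ i (Minv g)‖ ^ 2 + ‖Λ i g‖ ^ 2 / t)) := by
    apply Summable.mul_left
    apply Summable.add
    · exact (hsΘ.summable.mul_left t)
    · exact (hΛsummable.div_const t)
  have hnormsummable : Summable (fun i => ‖m i * ⟪Λ i g, Θ i (Minv g)⟫‖) :=
    Summable.of_nonneg_of_le (fun i => norm_nonneg _) hterm hmaj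
  -- main estimate
  have hgg : ‖g‖ ^ 2 ≤ mB / 2 * (t * sΘ + s / t) := by
    have h1 : ‖g‖ ^ 2 = ‖⟪g, g⟫‖ := by
      rw [inner_self_eq_norm_sq_to_K]
      simp [pow_two]
    have h2 : ‖⟪g, g⟫‖ ≤ ∑' i, ‖m i * ⟪Λ i g, Θ i (Minv g)⟫‖ := by
      rw [← hsum.tsum_eq]
      exact norm_tsum_le_tsum_norm hnormsummable
    have h3 : ∑' i, ‖m i * ⟪Λ i g, Θ i (Minv g)⟫‖
        ≤ ∑' i, mB / 2 * (t * ‖Θ i (Minv g)‖ ^ 2 + ‖Λ i g‖ ^ 2 / t) :=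
      Summable.tsum_le_tsum hterm hnormsummable hmaj
    have h4 : ∑' i, mB / 2 * (t * ‖Θ i (Minv g)‖ ^ 2 + ‖Λ i g‖ ^ 2 / t)
        = mB / 2 * (t * sΘ + s / t) := by
      rw [tsum_mul_left]
      congr 1
      rw [Summable.tsum_add (hsΘ.summable.mul_left t) (hΛsummable.div_const t),
        tsum_mul_left, tsum_div_const, hsΘ.tsum_eq]
    rw [h1]
    exact h2.trans (h3.trans (le_of_eq h4))
  -- conclude real inequality
  have hfinal : 1 / (mB ^ 2 * E) * ‖g‖ ^ 2 ≤ s := by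
    have hmono : mB / 2 * (t * sΘ + s / t) ≤ mB / 2 * (t * (E * ‖g‖ ^ 2) + s / t) := by
      apply mul_le_mul_of_nonneg_left _ (by positivity)
      have := mul_le_mul_of_nonneg_left hsΘE htpos.le
      linarith
    have heq2 : mB / 2 * (t * (E * ‖g‖ ^ 2) + s / t)
        = ‖g‖ ^ 2 / 2 + mB ^ 2 * E / 2 * s := by
      rw [ht]
      field_simp
    have h5 : ‖g‖ ^ 2 ≤ ‖g‖ ^ 2 / 2 + mB ^ 2 * E / 2 * s := by
      rw [← heq2]
      exact hgg.trans hmono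
    have h6 : ‖g‖ ^ 2 / (mB ^ 2 * E) ≤ s :=
      (div_le_iff₀ (by positivity)).mpr (by nlinarith)
    rw [one_div_mul_eq_div]
    exact h6
  -- transfer to ENNReal
  have heq : ∑' i, ENNReal.ofReal (‖Λ i g‖ ^ 2) = ENNReal.ofReal s := by
    rw [hs, ENNReal.ofReal_tsum_of_nonneg (fun i => by positivity) hΛsummable]
  rw [heq]
  exact ENNReal.ofReal_le_ofReal hfinal
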